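/- (Proposition 4.1, case T_{2,3,7}) The monodromy matrix A_{2,3,7} = [[5,-11],[1,-2]] of the link of the cusp singularity T_{2,3,7} is conjugate in SL(2, ℤ) to its own inverse: there exists P in SL(2, ℤ) with P * A_{2,3,7} * P⁻¹ = A_{2,3,7}⁻¹. -/

import Mathlib

/-- The monodromy matrix `A_{2,3,7} = [[5,-11],[1,-2]]` of the link of the
cusp singularity `T_{2,3,7}`, as an element of `SL(2, ℤ)`. -/
def A237 : Matrix.SpecialLinearGroup (Fin 2) ℤ :=
  ⟨!![5, -11; 1, -2], by norm_num [Matrix.det_fin_two_of]⟩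

/-- (Proposition 4.1, case `T_{2,3,7}`) The monodromy matrix `A_{2,3,7}` is
conjugate in `SL(2, ℤ)` to its own inverse. -/
theorem A237_conj_inv :
    ∃ P : Matrix.SpecialLinearGroup (Fin 2) ℤ, P * A237 * P⁻¹ = A237⁻¹ := by
  refine ⟨(id ⟨!![3, -10; 1, -3], by norm_num [Matrix.det_fin_two_of]⟩ : Matrix.SpecialLinearGroup (Fin 2) ℤ), ?_⟩
  rw [mul_inv_eq_iff_eq_mul, eq_inv_mul_iff_mul_eq]
  ext i j
  simp only [Matrix.SpecialLinearGroup.coe_mul]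
  simp only [id]
  simp [A237, Matrix.mul_apply, Fin.sum_univ_two]
  fin_cases i <;> fin_cases j <;> norm_num
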